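/- Theorem 1: The operator P(∂_z) is a bijective ℂ-linear map of ℂ[[z]] onto itself if and only if the following two conditions hold: (a) m = 0 (the lower ordinate of the Newton polygon of P(∂_z) equals zero); and (b) (non-resonance condition) W_0(n) ≠ 0 for every n ∈ ℕ₀. -/

import Mathlib

open PowerSeries

/-- Formal differentiation `∂_z` on `ℂ[[z]]` as a `ℂ`-linear map. -/
noncomputable def dz : PowerSeries ℂ →ₗ[ℂ] PowerSeries ℂ where
  toFun u := PowerSeries.mk fun n => ((n : ℂ) + 1) * PowerSeries.coeff (n + 1) u
  map_add' u v := by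
    ext n
    simp [mul_add]
  map_smul' c u := by
    ext n
    simp
    ring

/-- The order of vanishing at `0` of a formal power series. -/
noncomputable def ordz (g : PowerSeries ℂ) : ℕ := sInf {k : ℕ | PowerSeries.coeff k g ≠ 0}

/-- The operator `P(∂_z) u = Σ_{j∈Λ} a_j · ∂_z^j u`. -/
noncomputable def Pop (Λ : Finset ℕ) (a : ℕ → PowerSeries ℂ) :
    PowerSeries ℂ →ₗ[ℂ] PowerSeries ℂ :=
  ∑ j ∈ Λ, (LinearMap.mulLeft ℂ (a j)).comp (dz ^ j)

/-- The characteristic polynomial `W_q` evaluated at a natural number `n`: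
`W_q(n) = Σ_{j∈Λ, α_j−j=q} a_{j,j+q} · n(n−1)⋯(n−j+1)`. -/
noncomputable def W (Λ : Finset ℕ) (a : ℕ → PowerSeries ℂ) (q : ℤ) (n : ℕ) : ℂ :=
  ∑ j ∈ Λ.filter (fun j => (ordz (a j) : ℤ) - j = q),
    PowerSeries.coeff (ordz (a j)) (a j) * (n.descFactorial j : ℂ)

lemma coeff_dz (u : PowerSeries ℂ) (n : ℕ) :
    PowerSeries.coeff n (dz u) = ((n : ℂ) + 1) * PowerSeries.coeff (n + 1) u := by
  simp [dz]

lemma coeff_dz_pow (j : ℕ) (u : PowerSeries ℂ) (l : ℕ) :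
    PowerSeries.coeff l ((dz ^ j) u)
      = ((l + j).descFactorial j : ℂ) * PowerSeries.coeff (l + j) u := by
  induction j generalizing u with
  | zero => simp
  | succ j ih =>
      have h1 : (dz ^ (j + 1)) u = (dz ^ j) (dz u) := by
        rw [pow_succ]; rfl
      rw [h1, ih, coeff_dz]
      simp only [← add_assoc]
      rw [show (l + j + 1).descFactorial (j + 1) = (l + j + 1) * (l + j).descFactorial j from
        Nat.succ_descFactorial_succ (l + j) j]
      push_cast
      ring

lemma coeff_ordz_ne {g : PowerSeries ℂ} (hg : g ≠ 0) :
    PowerSeries.coeff (ordz g) g ≠ 0 := by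
  have h : ∃ k, PowerSeries.coeff k g ≠ 0 := by
    by_contra h
    push_neg at h
    exact hg (PowerSeries.ext fun n => by simpa using h n)
  exact Nat.sInf_mem h

lemma coeff_eq_zero_of_lt_ordz {g : PowerSeries ℂ} {k : ℕ} (h : k < ordz g) :
    PowerSeries.coeff k g = 0 := by
  have := Nat.notMem_of_lt_sInf (s := {k : ℕ | PowerSeries.coeff k g ≠ 0}) h
  simpa using this

noncomputable def coeffFun (Λ : Finset ℕ) (a : ℕ → PowerSeries ℂ) (N : ℕ) (f : ℕ → ℂ) : ℂ :=
  ∑ j ∈ Λ, ∑ k ∈ Finset.range (N + 1),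
    PowerSeries.coeff k (a j) * ((N - k + j).descFactorial j : ℂ) * f (N - k + j)

lemma coeff_Pop (Λ : Finset ℕ) (a : ℕ → PowerSeries ℂ) (u : PowerSeries ℂ) (N : ℕ) :
    PowerSeries.coeff N (Pop Λ a u) = coeffFun Λ a N (fun i => PowerSeries.coeff i u) := by
  unfold Pop coeffFun
  rw [LinearMap.sum_apply, map_sum]
  refine Finset.sum_congr rfl fun j hj => ?_
  rw [LinearMap.comp_apply, LinearMap.mulLeft_apply, PowerSeries.coeff_mul,
    Finset.Nat.sum_antidiagonal_eq_sum_range_succ_mk]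
  refine Finset.sum_congr rfl fun k hk => ?_
  rw [coeff_dz_pow]
  ring

lemma coeffFun_add (Λ : Finset ℕ) (a : ℕ → PowerSeries ℂ) (N : ℕ) (f g : ℕ → ℂ) :
    coeffFun Λ a N (fun i => f i + g i) = coeffFun Λ a N f + coeffFun Λ a N g := by
  simp [coeffFun, mul_add, Finset.sum_add_distrib]

lemma coeffFun_zero (Λ : Finset ℕ) (a : ℕ → PowerSeries ℂ) (N : ℕ) :
    coeffFun Λ a N (fun _ => 0) = 0 := by
  simp [coeffFun]

lemma coeffFun_smul (Λ : Finset ℕ) (a : ℕ → PowerSeries ℂ) (N : ℕ) (c : ℂ) (f : ℕ → ℂ) :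
    coeffFun Λ a N (fun i => c * f i) = c * coeffFun Λ a N f := by
  unfold coeffFun
  rw [Finset.mul_sum]
  refine Finset.sum_congr rfl fun j _ => ?_
  rw [Finset.mul_sum]
  refine Finset.sum_congr rfl fun k _ => ?_
  ring

lemma coeffFun_congr {Λ : Finset ℕ} {a : ℕ → PowerSeries ℂ} {d : ℕ}
    (hd : ∀ j ∈ Λ, j ≤ ordz (a j) + d) {N : ℕ} {f g : ℕ → ℂ}
    (h : ∀ i ≤ N + d, f i = g i) :
    coeffFun Λ a N f = coeffFun Λ a N g := by
  unfold coeffFun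
  refine Finset.sum_congr rfl fun j hj => Finset.sum_congr rfl fun k hk => ?_
  by_cases hck : PowerSeries.coeff k (a j) = 0
  · rw [hck]; simp
  · have hk1 : ordz (a j) ≤ k := by
      by_contra hlt
      exact hck (coeff_eq_zero_of_lt_ordz (by omega))
    have hdj := hd j hj
    have hkN : k < N + 1 := Finset.mem_range.mp hk
    rw [h _ (by omega)]

lemma coeffFun_vanish {Λ : Finset ℕ} {a : ℕ → PowerSeries ℂ} {d : ℕ} {q : ℤ}
    (hq : (d : ℤ) = -q) (hd : ∀ j ∈ Λ, j ≤ ordz (a j) + d) {N : ℕ} {f : ℕ → ℂ}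
    (hf : ∀ i < N + d, f i = 0) :
    coeffFun Λ a N f = W Λ a q (N + d) * f (N + d) := by
  unfold coeffFun W
  rw [Finset.sum_filter, Finset.sum_mul]
  refine Finset.sum_congr rfl fun j hj => ?_
  have hdj := hd j hj
  by_cases hcond : (ordz (a j) : ℤ) - j = q
  · rw [if_pos hcond]
    have hαd : ordz (a j) + d = j := by omega
    by_cases hN : ordz (a j) ≤ N
    · rw [Finset.sum_eq_single_of_mem (ordz (a j)) (Finset.mem_range.mpr (by omega))]
      · have he : N - ordz (a j) + j = N + d := by omega
        rw [he]
      · intro k hk hkne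
        have hkN : k < N + 1 := Finset.mem_range.mp hk
        rcases lt_or_gt_of_ne hkne with h1 | h2
        · rw [coeff_eq_zero_of_lt_ordz h1]; ring
        · rw [hf _ (by omega), mul_zero]
    · have hdesc : (N + d).descFactorial j = 0 :=
        Nat.descFactorial_eq_zero_iff_lt.mpr (by omega)
      rw [hdesc]
      push_cast
      rw [mul_zero, zero_mul]
      refine Finset.sum_eq_zero fun k hk => ?_
      have hkN : k < N + 1 := Finset.mem_range.mp hk
      rw [coeff_eq_zero_of_lt_ordz (by omega)]
      ring
  · rw [if_neg hcond, zero_mul]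
    refine Finset.sum_eq_zero fun k hk => ?_
    have hkN : k < N + 1 := Finset.mem_range.mp hk
    by_cases hck : PowerSeries.coeff k (a j) = 0
    · rw [hck]; ring
    · have hk1 : ordz (a j) ≤ k := by
        by_contra hlt
        exact hck (coeff_eq_zero_of_lt_ordz (by omega))
      rw [hf _ (by omega), mul_zero]

lemma coeffFun_split {Λ : Finset ℕ} {a : ℕ → PowerSeries ℂ} {d : ℕ} {q : ℤ}
    (hq : (d : ℤ) = -q) (hd : ∀ j ∈ Λ, j ≤ ordz (a j) + d) (N : ℕ) (f : ℕ → ℂ) :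
    coeffFun Λ a N f
      = W Λ a q (N + d) * f (N + d)
        + coeffFun Λ a N (fun i => if i < N + d then f i else 0) := by
  have h1 : coeffFun Λ a N f
      = coeffFun Λ a N (fun i =>
          (if i < N + d then f i else 0) + (if i < N + d then 0 else f i)) := by
    apply congrArg
    funext i
    by_cases h : i < N + d <;> simp [h]
  rw [h1, coeffFun_add, coeffFun_vanish hq hd (f := fun i => if i < N + d then 0 else f i)
    (fun i hi => if_pos hi)]
  rw [if_neg (lt_irrefl (N + d))]
  ring

noncomputable def solve (g : ℕ → (ℕ → ℂ) → ℂ) : ℕ → ℂ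
  | n => g n (fun i => if h : i < n then solve g i else 0)
  termination_by n => n

lemma solve_eq (g : ℕ → (ℕ → ℂ) → ℂ) (n : ℕ) :
    solve g n = g n (fun i => if i < n then solve g i else 0) := by
  rw [solve]
  rfl

lemma Pop_injective {Λ : Finset ℕ} {a : ℕ → PowerSeries ℂ}
    (hd0 : ∀ j ∈ Λ, j ≤ ordz (a j)) (hW : ∀ n, W Λ a 0 n ≠ 0) :
    Function.Injective (Pop Λ a) := by
  have hd : ∀ j ∈ Λ, j ≤ ordz (a j) + 0 := by simpa using hd0
  have hq : ((0 : ℕ) : ℤ) = -(0 : ℤ) := by simp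
  have key : ∀ u, Pop Λ a u = 0 → u = 0 := by
    intro u hu
    have hc : ∀ N, PowerSeries.coeff N u = 0 := by
      intro N
      induction N using Nat.strong_induction_on with
      | _ N ih =>
        have h1 : PowerSeries.coeff N (Pop Λ a u) = 0 := by rw [hu]; simp
        rw [coeff_Pop, coeffFun_split hq hd] at h1
        simp only [Nat.add_zero] at h1
        have h2 : coeffFun Λ a N (fun i => if i < N then PowerSeries.coeff i u else 0)
            = coeffFun Λ a N (fun _ => (0 : ℂ)) := by
          refine coeffFun_congr hd fun i hi => ?_
          by_cases h : i < N
          · simp [h, ih i h]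
          · simp [h]
        rw [h2, coeffFun_zero, add_zero] at h1
        exact (mul_eq_zero.mp h1).resolve_left (hW N)
    exact PowerSeries.ext fun n => by simpa using hc n
  intro u v huv
  have h := key (u - v) (by rw [map_sub, huv, sub_self])
  exact sub_eq_zero.mp h

lemma Pop_surjective {Λ : Finset ℕ} {a : ℕ → PowerSeries ℂ}
    (hd0 : ∀ j ∈ Λ, j ≤ ordz (a j)) (hW : ∀ n, W Λ a 0 n ≠ 0) :
    Function.Surjective (Pop Λ a) := by
  have hd : ∀ j ∈ Λ, j ≤ ordz (a j) + 0 := by simpa using hd0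
  have hq : ((0 : ℕ) : ℤ) = -(0 : ℤ) := by simp
  intro w
  obtain ⟨g, hg⟩ : ∃ g : ℕ → (ℕ → ℂ) → ℂ, ∀ N f, g N f
      = (PowerSeries.coeff N w
          - coeffFun Λ a N (fun i => if i < N then f i else 0)) / W Λ a 0 N :=
    ⟨_, fun _ _ => rfl⟩
  refine ⟨PowerSeries.mk (solve g), ?_⟩
  ext N
  rw [coeff_Pop, coeffFun_split hq hd]
  simp only [Nat.add_zero, PowerSeries.coeff_mk]
  have e2 : solve g N
      = (PowerSeries.coeff N w
          - coeffFun Λ a N (fun i => if i < N then solve g i else 0)) / W Λ a 0 N := by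
    rw [solve_eq, hg]
    have h3 : (fun i => if i < N then (if i < N then solve g i else 0) else 0)
        = fun i => if i < N then solve g i else 0 := by
      funext i
      by_cases h : i < N <;> simp [h]
    rw [h3]
  rw [e2]
  have hWN := hW N
  field_simp
  ring

lemma W_eventually_ne {Λ : Finset ℕ} {a : ℕ → PowerSeries ℂ} (ha : ∀ j ∈ Λ, a j ≠ 0)
    {q : ℤ} (hne : (Λ.filter (fun j => (ordz (a j) : ℤ) - j = q)).Nonempty) :
    ∃ N1 : ℕ, ∀ n, N1 ≤ n → W Λ a q n ≠ 0 := by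
  classical
  set F := Λ.filter (fun j => (ordz (a j) : ℤ) - j = q) with hF
  set p : Polynomial ℂ :=
    ∑ j ∈ F, Polynomial.C (PowerSeries.coeff (ordz (a j)) (a j)) * descPochhammer ℂ j
    with hp
  have heval : ∀ n : ℕ, W Λ a q n = p.eval (n : ℂ) := by
    intro n
    rw [hp, Polynomial.eval_finset_sum]
    refine Finset.sum_congr rfl fun j hj => ?_
    rw [Polynomial.eval_mul, Polynomial.eval_C, descPochhammer_eval_eq_descFactorial]
  have hp0 : p ≠ 0 := by
    set jm := F.max' hne with hjm
    have hjmF : jm ∈ F := F.max'_mem hne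
    have hcoeff : p.coeff jm = PowerSeries.coeff (ordz (a jm)) (a jm) := by
      rw [hp, Polynomial.finset_sum_coeff]
      rw [Finset.sum_eq_single_of_mem jm hjmF]
      · rw [Polynomial.coeff_C_mul]
        have h1 : (descPochhammer ℂ jm).natDegree = jm := descPochhammer_natDegree ℂ jm
        have h2 : (descPochhammer ℂ jm).Monic := monic_descPochhammer ℂ jm
        have h3 := h2.coeff_natDegree
        rw [h1] at h3
        rw [h3, mul_one]
      · intro j hj hjne
        rw [Polynomial.coeff_C_mul]
        have hlt : j < jm := lt_of_le_of_ne (F.le_max' j hj) hjne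
        rw [Polynomial.coeff_eq_zero_of_natDegree_lt (by rw [descPochhammer_natDegree]; exact hlt),
          mul_zero]
    intro h0
    rw [h0, Polynomial.coeff_zero] at hcoeff
    have hjmΛ : jm ∈ Λ := Finset.mem_filter.mp hjmF |>.1
    exact coeff_ordz_ne (ha jm hjmΛ) hcoeff.symm
  have hfin : Set.Finite {n : ℕ | p.eval (n : ℂ) = 0} := by
    have h1 : Set.Finite {x : ℂ | p.IsRoot x} := Polynomial.finite_setOf_isRoot hp0
    have h2 : {n : ℕ | p.eval (n : ℂ) = 0} = (fun n : ℕ => (n : ℂ)) ⁻¹' {x : ℂ | p.IsRoot x} :=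
      rfl
    rw [h2]
    exact Set.Finite.preimage (Set.injOn_of_injective Nat.cast_injective) h1
  obtain ⟨B, hB⟩ := hfin.bddAbove
  refine ⟨B + 1, fun n hn => ?_⟩
  rw [heval]
  intro h0
  have : n ≤ B := hB h0
  omega

lemma Pop_not_injective {Λ : Finset ℕ} {a : ℕ → PowerSeries ℂ} (ha : ∀ j ∈ Λ, a j ≠ 0)
    {d : ℕ} {q : ℤ} (hq : (d : ℤ) = -q) (hd1 : 1 ≤ d)
    (hd : ∀ j ∈ Λ, j ≤ ordz (a j) + d) (hex : ∃ j ∈ Λ, ordz (a j) + d = j) :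
    ¬ Function.Injective (Pop Λ a) := by
  classical
  have hne : (Λ.filter (fun j => (ordz (a j) : ℤ) - j = q)).Nonempty := by
    obtain ⟨j, hj, he⟩ := hex
    refine ⟨j, Finset.mem_filter.mpr ⟨hj, ?_⟩⟩
    have : ((ordz (a j) : ℤ)) + d = j := by exact_mod_cast congrArg (Nat.cast : ℕ → ℤ) he
    omega
  obtain ⟨N1, hN1⟩ := W_eventually_ne ha hne
  set pad : (Fin (N1 + d) → ℂ) → (ℕ → ℂ) :=
    fun x i => if h : i < N1 + d then x ⟨i, h⟩ else 0 with hpad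
  have pad_add : ∀ x y, pad (x + y) = fun i => pad x i + pad y i := by
    intro x y
    funext i
    by_cases h : i < N1 + d <;> simp [hpad, h]
  have pad_smul : ∀ (c : ℂ) x, pad (c • x) = fun i => c * pad x i := by
    intro c x
    funext i
    by_cases h : i < N1 + d <;> simp [hpad, h]
  set L : (Fin (N1 + d) → ℂ) →ₗ[ℂ] (Fin N1 → ℂ) :=
    { toFun := fun x N => coeffFun Λ a N (pad x)
      map_add' := fun x y => by
        funext N
        simp only [Pi.add_apply]
        rw [pad_add, coeffFun_add]
      map_smul' := fun c x => by
        funext N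
        simp only [Pi.smul_apply, smul_eq_mul, RingHom.id_apply]
        rw [pad_smul, coeffFun_smul] } with hL
  have hLni : ¬ Function.Injective L := by
    intro hinj
    have h1 := LinearMap.finrank_le_finrank_of_injective hinj
    simp only [Module.finrank_fin_fun] at h1
    omega
  obtain ⟨x, y, hxy, hne2⟩ := Function.not_injective_iff.mp hLni
  have hLz : L (x - y) = 0 := by rw [map_sub, hxy, sub_self]
  have hz0 : x - y ≠ 0 := sub_ne_zero.mpr hne2
  set z : Fin (N1 + d) → ℂ := x - y with hz
  obtain ⟨g, hg⟩ : ∃ g : ℕ → (ℕ → ℂ) → ℂ, ∀ n f, g n f =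
      if h : n < N1 + d then z ⟨n, h⟩
      else -(coeffFun Λ a (n - d) (fun i => if i < n then f i else 0)) / W Λ a q n :=
    ⟨_, fun _ _ => rfl⟩
  have hsol_lt : ∀ i (h : i < N1 + d), solve g i = z ⟨i, h⟩ := by
    intro i h
    rw [solve_eq, hg, dif_pos h]
  have hsol_pad : ∀ i, i < N1 + d → solve g i = pad z i := by
    intro i h
    rw [hsol_lt i h]
    simp [hpad, h]
  intro hinj
  obtain ⟨i0, hi0⟩ := Function.ne_iff.mp hz0
  simp only [Pi.zero_apply] at hi0
  have hu0 : PowerSeries.mk (solve g) ≠ 0 := by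
    intro h
    have h5 := congrArg (PowerSeries.coeff (i0 : ℕ)) h
    rw [PowerSeries.coeff_mk, map_zero] at h5
    have h4 := hsol_lt (i0 : ℕ) i0.isLt
    rw [Fin.eta] at h4
    exact hi0 (h4.symm.trans h5)
  have hPu : Pop Λ a (PowerSeries.mk (solve g)) = 0 := by
    ext N
    rw [coeff_Pop]
    simp only [PowerSeries.coeff_mk, map_zero]
    rcases lt_or_ge N N1 with hN | hN
    · have h1 : coeffFun Λ a N (fun i => solve g i) = coeffFun Λ a N (pad z) :=
        coeffFun_congr hd fun i hi => hsol_pad i (by omega)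
      rw [h1]
      have h2 := congrFun hLz ⟨N, hN⟩
      simpa [hL] using h2
    · rw [coeffFun_split hq hd]
      have hWn : W Λ a q (N + d) ≠ 0 := hN1 (N + d) (by omega)
      have e2 : solve g (N + d)
          = -(coeffFun Λ a N (fun i => if i < N + d then solve g i else 0))
            / W Λ a q (N + d) := by
        rw [solve_eq, hg, dif_neg (by omega)]
        have h3 : (fun i => if i < N + d then (if i < N + d then solve g i else 0) else 0)
            = fun i => if i < N + d then solve g i else 0 := by
          funext i
          by_cases h : i < N + d <;> simp [h]
        rw [Nat.add_sub_cancel, h3]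
      rw [e2, mul_comm, div_mul_cancel₀ _ hWn]
      ring
  exact hu0 (hinj (by rw [hPu, map_zero]))

/-- Theorem 1: `P(∂_z)` is a bijective `ℂ`-linear map of `ℂ[[z]]` onto itself iff
(a) the lower ordinate `m` of the Newton polygon is `0`, and
(b) `W_0(n) ≠ 0` for all `n ∈ ℕ₀`. -/
theorem statement0 (Λ : Finset ℕ) (hΛ : Λ.Nonempty) (a : ℕ → PowerSeries ℂ)
    (ha : ∀ j ∈ Λ, a j ≠ 0) :
    Function.Bijective (Pop Λ a) ↔
      (Λ.inf' hΛ (fun j => (ordz (a j) : ℤ) - j) = 0 ∧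
        ∀ n : ℕ, W Λ a 0 n ≠ 0) := by
  classical
  constructor
  · intro hbij
    have hd0 : ∀ j ∈ Λ, j ≤ ordz (a j) := by
      by_contra hcon
      push_neg at hcon
      obtain ⟨j0, hj0Λ, hj0⟩ := hcon
      have hm_le : Λ.inf' hΛ (fun j => (ordz (a j) : ℤ) - j) ≤ (ordz (a j0) : ℤ) - j0 :=
        Finset.inf'_le _ hj0Λ
      set m := Λ.inf' hΛ (fun j => (ordz (a j) : ℤ) - j) with hm
      have hj0' : (ordz (a j0) : ℤ) < (j0 : ℤ) := by exact_mod_cast hj0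
      have hmneg : m < 0 := by omega
      set d : ℕ := (-m).toNat with hdd
      have hdz : (d : ℤ) = -m := Int.toNat_of_nonneg (by omega)
      have hd1 : 1 ≤ d := by omega
      have hd : ∀ j ∈ Λ, j ≤ ordz (a j) + d := by
        intro j hj
        have h1 : m ≤ (ordz (a j) : ℤ) - j :=
          Finset.inf'_le (fun j => (ordz (a j) : ℤ) - j) hj
        omega
      have hex : ∃ j ∈ Λ, ordz (a j) + d = j := by
        obtain ⟨j1, hj1, hj1e⟩ :=
          Finset.exists_mem_eq_inf' hΛ (fun j => (ordz (a j) : ℤ) - j)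
        refine ⟨j1, hj1, ?_⟩
        have h1 : m = (ordz (a j1) : ℤ) - j1 := hj1e
        omega
      exact absurd hbij.1 (Pop_not_injective ha hdz hd1 hd hex)
    have hd : ∀ j ∈ Λ, j ≤ ordz (a j) + 0 := by simpa using hd0
    have hq : ((0 : ℕ) : ℤ) = -(0 : ℤ) := by simp
    have hjeq : ∃ j ∈ Λ, ordz (a j) = j := by
      by_contra hcon
      push_neg at hcon
      obtain ⟨u, hu⟩ := hbij.2 1
      have h1 := congrArg (PowerSeries.coeff 0) hu
      have h2 : coeffFun Λ a 0 (fun i => PowerSeries.coeff i u) = 0 := by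
        unfold coeffFun
        refine Finset.sum_eq_zero fun j hj => ?_
        rw [Finset.sum_range_one]
        have hpos : 0 < ordz (a j) := by
          have h3 := hd0 j hj
          have h4 := hcon j hj
          omega
        rw [coeff_eq_zero_of_lt_ordz hpos, zero_mul, zero_mul]
      rw [coeff_Pop, h2] at h1
      simp at h1
    refine ⟨?_, ?_⟩
    · obtain ⟨je, hje, hjee⟩ := hjeq
      refine le_antisymm ?_ ?_
      · have h1 : Λ.inf' hΛ (fun j => (ordz (a j) : ℤ) - j) ≤ (ordz (a je) : ℤ) - je :=
          Finset.inf'_le _ hje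
        rw [hjee] at h1
        omega
      · refine Finset.le_inf' hΛ _ fun j hj => ?_
        have h1 := hd0 j hj
        omega
    · by_contra hcon
      push_neg at hcon
      have hEx : ∃ n, W Λ a 0 n = 0 := hcon
      set n0 := Nat.find hEx with hn0
      have hW0 : W Λ a 0 n0 = 0 := Nat.find_spec hEx
      have hWlt : ∀ k, k < n0 → W Λ a 0 k ≠ 0 := fun k hk => Nat.find_min hEx hk
      obtain ⟨u, hu⟩ := hbij.2 ((PowerSeries.X : PowerSeries ℂ) ^ n0)
      have hck : ∀ k, k < n0 → PowerSeries.coeff k u = 0 := by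
        intro k
        induction k using Nat.strong_induction_on with
        | _ k ih =>
          intro hk
          have h1 : PowerSeries.coeff k (Pop Λ a u) = 0 := by
            rw [hu, PowerSeries.coeff_X_pow, if_neg (by omega)]
          rw [coeff_Pop, coeffFun_split hq hd] at h1
          simp only [Nat.add_zero] at h1
          have h2 : coeffFun Λ a k (fun i => if i < k then PowerSeries.coeff i u else 0)
              = coeffFun Λ a k (fun _ => (0 : ℂ)) := by
            refine coeffFun_congr hd fun i hi => ?_
            by_cases h : i < k
            · simp [h, ih i h (by omega)]
            · simp [h]
          rw [h2, coeffFun_zero, add_zero] at h1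
          exact (mul_eq_zero.mp h1).resolve_left (hWlt k hk)
      have h1 : PowerSeries.coeff n0 (Pop Λ a u) = 1 := by
        rw [hu, PowerSeries.coeff_X_pow, if_pos rfl]
      rw [coeff_Pop, coeffFun_split hq hd] at h1
      simp only [Nat.add_zero] at h1
      have h2 : coeffFun Λ a n0 (fun i => if i < n0 then PowerSeries.coeff i u else 0)
          = coeffFun Λ a n0 (fun _ => (0 : ℂ)) := by
        refine coeffFun_congr hd fun i hi => ?_
        by_cases h : i < n0
        · simp [h, hck i h]
        · simp [h]
      rw [h2, coeffFun_zero, add_zero, hW0, zero_mul] at h1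
      exact zero_ne_one h1
  · rintro ⟨hm, hW⟩
    have hd0 : ∀ j ∈ Λ, j ≤ ordz (a j) := by
      intro j hj
      have h1 : Λ.inf' hΛ (fun j => (ordz (a j) : ℤ) - j) ≤ (ordz (a j) : ℤ) - j :=
        Finset.inf'_le _ hj
      rw [hm] at h1
      omega
    exact ⟨Pop_injective hd0 hW, Pop_surjective hd0 hW⟩
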